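/- Let M = {2,...,m+1}, let k_1,...,k_{m+1} be nonnegative integers and K = k_1 + ∑_{i∈M} k_i. Then (K−k_1)^{[m]} + ∑_{∅≠I⊆M} (k_1+1)·(K(I)+k_1)^{[|I|−1]}·(K−K(I)−k_1)^{[m−|I|]} = (K+1)^{[m]}, where K(I)=∑_{i∈I} k_i and x^{[p]} denotes the falling factorial power. -/

import Mathlib

open Finset
open Polynomial

/-- Falling factorial power `x^{[p]} = x(x-1)⋯(x-p+1)` for an integer `x`. -/
def fall (x : ℤ) (p : ℕ) : ℤ := ∏ i ∈ Finset.range p, (x - i)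

lemma fall_succ (x : ℤ) (p : ℕ) : fall x (p+1) = fall x p * (x - p) := by
  simp [fall, Finset.prod_range_succ]

lemma fall_succ' (x : ℤ) (p : ℕ) : fall x (p+1) = x * fall (x-1) p := by
  rw [fall, Finset.prod_range_succ']
  simp only [Nat.cast_zero, sub_zero]
  rw [mul_comm]
  congr 1
  rw [fall]
  apply Finset.prod_congr rfl
  intro i _
  push_cast
  ring

lemma fall_zero' (p : ℕ) : fall 0 (p+1) = 0 := by simp [fall_succ']

lemma fall_diff (z : ℤ) (p : ℕ) : fall (z+1) p - fall z p = p * fall z (p-1) := by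
  cases p with
  | zero => simp [fall]
  | succ p =>
      rw [fall_succ' (z+1), fall_succ z, show z+1-1 = z by ring]
      push_cast
      ring

lemma fall_add (u : ℤ) (e d : ℕ) : fall u (e+d) = fall u e * fall (u - e) d := by
  rw [fall, fall, fall, Finset.prod_range_add]
  congr 1
  apply Finset.prod_congr rfl
  intro i _
  push_cast
  ring

lemma fall_neg (w : ℤ) (e : ℕ) : fall (-w) e = (-1)^e * fall (w + e - 1) e := by
  induction e with
  | zero => simp [fall]
  | succ e ih =>
      rw [fall_succ, ih, show (w + (↑(e+1)):ℤ) - 1 = w + ↑e by push_cast; ring,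
        fall_succ' (w + ↑e) e]
      ring

lemma neg_one_pow_sub {c n : ℕ} (hc : c ≤ n) :
    ((-1:ℤ))^(n-c) = (-1)^n * (-1)^c := by
  have h : (-1:ℤ)^n = (-1)^(n-c) * (-1)^c := by
    rw [← pow_add, Nat.sub_add_cancel hc]
  rw [h, mul_assoc, ← pow_add, ← two_mul, pow_mul]
  norm_num

lemma const_of_step (g : ℤ → ℤ) (h : ∀ y, g (y+1) = g y) (a : ℤ) (ha : g a = 0) :
    ∀ y, g y = 0 := by
  have key : ∀ n : ℤ, g (a + n) = 0 := by
    intro n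
    induction n using Int.induction_on with
    | zero => simpa using ha
    | succ n ihn =>
        rw [show a + (↑n + 1) = (a + ↑n) + 1 by ring, h]
        exact ihn
    | pred n ihn =>
        have := h (a + (-↑n - 1))
        rw [show a + (-↑n - 1) + 1 = a + (-↑n) by ring] at this
        rw [← this]
        exact ihn
  intro y
  have := key (y - a)
  rwa [show a + (y - a) = y by ring] at this

lemma findiff {ι : Type*} [DecidableEq ι] (h : ι → ℤ) (M : Finset ι) :
    ∀ (P : Polynomial ℤ), P.natDegree < M.card →
    ∑ I ∈ M.powerset, (-1:ℤ)^I.card * P.eval (∑ i ∈ I, h i) = 0 := by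
  induction M using Finset.induction_on with
  | empty => intro P hP; simp at hP
  | @insert a s ha ihs =>
      intro P hP
      rw [Finset.sum_powerset_insert ha]
      set Q : Polynomial ℤ := P - P.comp (X + C (h a)) with hQ
      have hsum : ∀ I ∈ s.powerset,
          (-1:ℤ)^I.card * P.eval (∑ i ∈ I, h i)
            + (-1:ℤ)^(insert a I).card * P.eval (∑ i ∈ insert a I, h i)
          = (-1:ℤ)^I.card * Q.eval (∑ i ∈ I, h i) := by
        intro I hI
        have haI : a ∉ I := fun hmem => ha (Finset.mem_powerset.mp hI hmem)
        rw [Finset.card_insert_of_notMem haI, Finset.sum_insert haI, hQ]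
        simp only [eval_sub, eval_comp, eval_add, eval_X, eval_C]
        rw [show (∑ i ∈ I, h i) + h a = h a + ∑ i ∈ I, h i by ring]
        ring
      rw [← Finset.sum_add_distrib, Finset.sum_congr rfl hsum]
      rcases eq_or_ne Q 0 with hQ0 | hQ0
      · apply Finset.sum_eq_zero
        intro I _
        rw [hQ0]
        simp
      · have hP0 : P ≠ 0 := by
          rintro rfl
          apply hQ0
          simp [hQ]
        have hPd : P.natDegree ≠ 0 := by
          intro h0
          obtain ⟨c, rfl⟩ := Polynomial.natDegree_eq_zero.mp h0
          apply hQ0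
          simp [hQ]
        have hXC : (X + C (h a)).natDegree ≠ 0 := by
          rw [Polynomial.natDegree_X_add_C]; exact one_ne_zero
        have hlc : (P.comp (X + C (h a))).leadingCoeff = P.leadingCoeff := by
          rw [Polynomial.leadingCoeff_comp hXC, Polynomial.leadingCoeff_X_add_C]
          simp
        have hcomp0 : P.comp (X + C (h a)) ≠ 0 := by
          intro h0
          apply hP0
          rw [← Polynomial.leadingCoeff_eq_zero, ← hlc, h0]
          simp
        have hdeg : P.degree = (P.comp (X + C (h a))).degree := by
          rw [Polynomial.degree_eq_natDegree hP0, Polynomial.degree_eq_natDegree hcomp0,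
            Polynomial.natDegree_comp, Polynomial.natDegree_X_add_C, mul_one]
        have hlt : Q.degree < P.degree := Polynomial.degree_sub_lt hdeg hP0 hlc.symm
        have hnd : Q.natDegree < P.natDegree :=
          Polynomial.natDegree_lt_natDegree hQ0 hlt
        apply ihs
        have hcard : P.natDegree ≤ s.card := by
          rw [Finset.card_insert_of_notMem ha] at hP
          omega
        omega

theorem key {ι : Type*} [DecidableEq ι] :
    ∀ (m : ℕ) (M : Finset ι), M.card = m → ∀ (k : ι → ℤ) (x y : ℤ),
    fall (y + ∑ i ∈ M, k i) m
      + ∑ I ∈ M.powerset.filter (fun I => I.Nonempty),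
          x * fall (x + (∑ i ∈ I, k i) - 1) (I.card - 1)
            * fall (y + ∑ i ∈ M \ I, k i) (m - I.card)
      = fall (x + y + ∑ i ∈ M, k i) m := by
  intro m
  induction m with
  | zero =>
      intro M hM k x y
      rw [Finset.card_eq_zero] at hM
      subst hM
      simp [fall, Finset.filter_singleton]
  | succ m ih =>
      intro M hM k x y
      -- abbreviations (as plain terms)
      -- step equation
      have hstep : ∀ z : ℤ,
          (fall (z + 1 + ∑ i ∈ M, k i) (m+1)
            + ∑ I ∈ M.powerset.filter (fun I => I.Nonempty),
                x * fall (x + (∑ i ∈ I, k i) - 1) (I.card - 1)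
                  * fall (z + 1 + ∑ i ∈ M \ I, k i) (m + 1 - I.card)
            - fall (x + (z + 1) + ∑ i ∈ M, k i) (m+1))
          = (fall (z + ∑ i ∈ M, k i) (m+1)
            + ∑ I ∈ M.powerset.filter (fun I => I.Nonempty),
                x * fall (x + (∑ i ∈ I, k i) - 1) (I.card - 1)
                  * fall (z + ∑ i ∈ M \ I, k i) (m + 1 - I.card)
            - fall (x + z + ∑ i ∈ M, k i) (m+1)) := by
        intro z
        have h1 : fall (z + 1 + ∑ i ∈ M, k i) (m+1)
            - fall (z + ∑ i ∈ M, k i) (m+1)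
            = (↑(m+1) : ℤ) * fall (z + ∑ i ∈ M, k i) m := by
          have hd := fall_diff (z + ∑ i ∈ M, k i) (m + 1)
          simp only [Nat.add_sub_cancel] at hd
          rw [show z + ∑ i ∈ M, k i + 1 = z + 1 + ∑ i ∈ M, k i by ring] at hd
          exact hd
        have h2 : fall (x + (z + 1) + ∑ i ∈ M, k i) (m+1)
            - fall (x + z + ∑ i ∈ M, k i) (m+1)
            = (↑(m+1) : ℤ) * fall (x + z + ∑ i ∈ M, k i) m := by
          have hd := fall_diff (x + z + ∑ i ∈ M, k i) (m + 1)
          simp only [Nat.add_sub_cancel] at hd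
          rw [show x + z + ∑ i ∈ M, k i + 1 = x + (z + 1) + ∑ i ∈ M, k i by ring] at hd
          exact hd
        have hsum : (∑ I ∈ M.powerset.filter (fun I => I.Nonempty),
                x * fall (x + (∑ i ∈ I, k i) - 1) (I.card - 1)
                  * fall (z + 1 + ∑ i ∈ M \ I, k i) (m + 1 - I.card))
            - (∑ I ∈ M.powerset.filter (fun I => I.Nonempty),
                x * fall (x + (∑ i ∈ I, k i) - 1) (I.card - 1)
                  * fall (z + ∑ i ∈ M \ I, k i) (m + 1 - I.card))
            = ∑ I ∈ M.powerset.filter (fun I => I.Nonempty),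
                (↑(m + 1 - I.card) : ℤ) *
                  (x * fall (x + (∑ i ∈ I, k i) - 1) (I.card - 1)
                  * fall (z + ∑ i ∈ M \ I, k i) (m - I.card)) := by
          rw [← Finset.sum_sub_distrib]
          apply Finset.sum_congr rfl
          intro I hI
          have hd := fall_diff (z + ∑ i ∈ M \ I, k i) (m + 1 - I.card)
          rw [show m + 1 - I.card - 1 = m - I.card from by omega] at hd
          rw [show z + 1 + ∑ i ∈ M \ I, k i = (z + ∑ i ∈ M \ I, k i) + 1 by ring]
          have hexp : fall ((z + ∑ i ∈ M \ I, k i) + 1) (m + 1 - I.card)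
              = fall (z + ∑ i ∈ M \ I, k i) (m + 1 - I.card)
                + (↑(m + 1 - I.card) : ℤ) * fall (z + ∑ i ∈ M \ I, k i) (m - I.card) := by
            linarith
          rw [hexp]
          ring
        -- the exchange identity
        have hexch : (∑ I ∈ M.powerset.filter (fun I => I.Nonempty),
                (↑(m + 1 - I.card) : ℤ) *
                  (x * fall (x + (∑ i ∈ I, k i) - 1) (I.card - 1)
                  * fall (z + ∑ i ∈ M \ I, k i) (m - I.card)))
            = (↑(m+1) : ℤ) * fall (x + z + ∑ i ∈ M, k i) m
              - (↑(m+1) : ℤ) * fall (z + ∑ i ∈ M, k i) m := by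
          have step1 : ∀ I ∈ M.powerset.filter (fun I => I.Nonempty),
              (↑(m + 1 - I.card) : ℤ) *
                  (x * fall (x + (∑ i ∈ I, k i) - 1) (I.card - 1)
                  * fall (z + ∑ i ∈ M \ I, k i) (m - I.card))
              = ∑ _t ∈ M \ I,
                  x * fall (x + (∑ i ∈ I, k i) - 1) (I.card - 1)
                  * fall (z + ∑ i ∈ M \ I, k i) (m - I.card) := by
            intro I hI
            rw [Finset.sum_const, nsmul_eq_mul]
            have hsub : I ⊆ M := Finset.mem_powerset.mp (Finset.mem_filter.mp hI).1
            rw [Finset.card_sdiff_of_subset hsub, hM]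
          rw [Finset.sum_congr rfl step1]
          have hswap : (∑ I ∈ M.powerset.filter (fun I => I.Nonempty), ∑ _t ∈ M \ I,
                  x * fall (x + (∑ i ∈ I, k i) - 1) (I.card - 1)
                  * fall (z + ∑ i ∈ M \ I, k i) (m - I.card))
              = ∑ t ∈ M, ∑ I ∈ (M.erase t).powerset.filter (fun I => I.Nonempty),
                  x * fall (x + (∑ i ∈ I, k i) - 1) (I.card - 1)
                  * fall (z + ∑ i ∈ M \ I, k i) (m - I.card) := by
            apply Finset.sum_comm'
            intro I t
            simp only [Finset.mem_filter, Finset.mem_powerset, Finset.mem_sdiff,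
              Finset.subset_erase]
            tauto
          rw [hswap]
          have hper : ∀ t ∈ M,
              (∑ I ∈ (M.erase t).powerset.filter (fun I => I.Nonempty),
                  x * fall (x + (∑ i ∈ I, k i) - 1) (I.card - 1)
                  * fall (z + ∑ i ∈ M \ I, k i) (m - I.card))
              = fall (x + z + ∑ i ∈ M, k i) m - fall (z + ∑ i ∈ M, k i) m := by
            intro t ht
            have hcard : (M.erase t).card = m := by
              rw [Finset.card_erase_of_mem ht, hM]
              omega
            have hform : ∀ I ∈ (M.erase t).powerset.filter (fun I => I.Nonempty),
                x * fall (x + (∑ i ∈ I, k i) - 1) (I.card - 1)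
                  * fall (z + ∑ i ∈ M \ I, k i) (m - I.card)
                = x * fall (x + (∑ i ∈ I, k i) - 1) (I.card - 1)
                  * fall ((z + k t) + ∑ i ∈ (M.erase t) \ I, k i) (m - I.card) := by
              intro I hI
              have hsub : I ⊆ M.erase t := Finset.mem_powerset.mp (Finset.mem_filter.mp hI).1
              have htI : t ∉ I := fun hmem => (Finset.mem_erase.mp (hsub hmem)).1 rfl
              have htMI : t ∈ M \ I := Finset.mem_sdiff.mpr ⟨ht, htI⟩
              have : ∑ i ∈ M \ I, k i = k t + ∑ i ∈ (M \ I).erase t, k i :=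
                (Finset.add_sum_erase _ k htMI).symm
              rw [this, Finset.erase_sdiff_comm]
              ring_nf
            rw [Finset.sum_congr rfl hform]
            have hIH := ih (M.erase t) hcard k x (z + k t)
            have hsumM : k t + ∑ i ∈ M.erase t, k i = ∑ i ∈ M, k i :=
              Finset.add_sum_erase _ k ht
            rw [show (z + k t) + ∑ i ∈ M.erase t, k i = z + (k t + ∑ i ∈ M.erase t, k i) by ring,
              hsumM] at hIH
            rw [show x + (z + k t) + ∑ i ∈ M.erase t, k i
                = x + z + (k t + ∑ i ∈ M.erase t, k i) by ring, hsumM] at hIH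
            linarith
          rw [Finset.sum_congr rfl hper, Finset.sum_const, hM, nsmul_eq_mul]
          ring
        rw [hexch] at hsum
        linarith
      -- anchor
      have hanchor :
          (fall (-x - ∑ i ∈ M, k i + ∑ i ∈ M, k i) (m+1)
            + ∑ I ∈ M.powerset.filter (fun I => I.Nonempty),
                x * fall (x + (∑ i ∈ I, k i) - 1) (I.card - 1)
                  * fall (-x - ∑ i ∈ M, k i + ∑ i ∈ M \ I, k i) (m + 1 - I.card)
            - fall (x + (-x - ∑ i ∈ M, k i) + ∑ i ∈ M, k i) (m+1)) = 0 := by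
        rw [show -x - ∑ i ∈ M, k i + ∑ i ∈ M, k i = -x by ring,
          show x + (-x - ∑ i ∈ M, k i) + ∑ i ∈ M, k i = 0 by ring, fall_zero', sub_zero]
        have hterm : ∀ I ∈ M.powerset.filter (fun I => I.Nonempty),
            x * fall (x + (∑ i ∈ I, k i) - 1) (I.card - 1)
              * fall (-x - ∑ i ∈ M, k i + ∑ i ∈ M \ I, k i) (m + 1 - I.card)
            = (-1:ℤ)^(m + 1 - I.card)
              * (x * fall (x + (∑ i ∈ I, k i) + (m:ℤ) - (I.card:ℤ)) m) := by
          intro I hI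
          obtain ⟨hIp, hne⟩ := Finset.mem_filter.mp hI
          have hsub : I ⊆ M := Finset.mem_powerset.mp hIp
          have hc1 : 1 ≤ I.card := Finset.card_pos.mpr hne
          have hc2 : I.card ≤ m + 1 := hM ▸ Finset.card_le_card hsub
          have hsd : ∑ i ∈ M \ I, k i = (∑ i ∈ M, k i) - ∑ i ∈ I, k i :=
            Finset.sum_sdiff_eq_sub hsub
          rw [hsd, show -x - ∑ i ∈ M, k i + ((∑ i ∈ M, k i) - ∑ i ∈ I, k i)
              = -(x + ∑ i ∈ I, k i) by ring]
          rw [fall_neg (x + ∑ i ∈ I, k i) (m + 1 - I.card)]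
          have harg : x + (∑ i ∈ I, k i) + (↑(m + 1 - I.card) : ℤ) - 1
              = x + (∑ i ∈ I, k i) + (m:ℤ) - (I.card:ℤ) := by
            rw [Nat.cast_sub hc2]
            push_cast
            ring
          rw [harg]
          have hmerge := fall_add (x + (∑ i ∈ I, k i) + (m:ℤ) - (I.card:ℤ))
            (m + 1 - I.card) (I.card - 1)
          rw [show (m + 1 - I.card) + (I.card - 1) = m from by omega] at hmerge
          have harg2 : x + (∑ i ∈ I, k i) + (m:ℤ) - (I.card:ℤ) - (↑(m + 1 - I.card) : ℤ)
              = x + (∑ i ∈ I, k i) - 1 := by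
            rw [Nat.cast_sub hc2]
            push_cast
            ring
          rw [harg2] at hmerge
          rw [hmerge]
          ring
        rw [Finset.sum_congr rfl hterm]
        have hempty : fall (-x) (m+1)
            = (-1:ℤ)^(m + 1) * (x * fall (x + (m:ℤ)) m) := by
          rw [fall_neg x (m+1), show x + (↑(m+1):ℤ) - 1 = (x + (m:ℤ)) by push_cast; ring,
            fall_succ (x + (m:ℤ)) m]
          ring_nf
        -- assemble into a sum over the full powerset
        have hfull : fall (-x) (m+1)
            + ∑ I ∈ M.powerset.filter (fun I => I.Nonempty),
                (-1:ℤ)^(m + 1 - I.card)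
                  * (x * fall (x + (∑ i ∈ I, k i) + (m:ℤ) - (I.card:ℤ)) m)
            = ∑ I ∈ M.powerset,
                (-1:ℤ)^(m + 1 - I.card)
                  * (x * fall (x + (∑ i ∈ I, k i) + (m:ℤ) - (I.card:ℤ)) m) := by
          rw [← Finset.sum_filter_add_sum_filter_not M.powerset (fun I => I.Nonempty)]
          have hfe : M.powerset.filter (fun I => ¬ I.Nonempty) = {∅} := by
            ext J
            simp only [Finset.mem_filter, Finset.mem_powerset, Finset.mem_singleton,
              Finset.not_nonempty_iff_eq_empty]
            exact ⟨fun h => h.2, fun h => ⟨h ▸ Finset.empty_subset M, h⟩⟩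
          rw [hfe, Finset.sum_singleton]
          simp only [Finset.card_empty, Finset.sum_empty, Nat.sub_zero, Nat.cast_zero,
            add_zero, sub_zero]
          rw [hempty]
          ring
        rw [hfull]
        -- now the finite-difference identity kills the full sum
        have heval : ∀ v : ℤ,
            (∏ j ∈ Finset.range m, (X + C (x + (m:ℤ) - (j:ℤ)))).eval v
            = fall (x + (m:ℤ) + v) m := by
          intro v
          rw [eval_prod, fall]
          apply Finset.prod_congr rfl
          intro j _
          simp only [eval_add, eval_X, eval_C]
          ring
        have hdeg : (∏ j ∈ Finset.range m, (X + C (x + (m:ℤ) - (j:ℤ)))).natDegree < M.card := by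
          rw [hM]
          calc (∏ j ∈ Finset.range m, (X + C (x + (m:ℤ) - (j:ℤ)))).natDegree
              ≤ ∑ j ∈ Finset.range m, (X + C (x + (m:ℤ) - (j:ℤ))).natDegree :=
                Polynomial.natDegree_prod_le _ _
            _ = ∑ _j ∈ Finset.range m, 1 := by
                apply Finset.sum_congr rfl
                intro j _
                exact Polynomial.natDegree_X_add_C _
            _ = m := by simp
            _ < m + 1 := Nat.lt_succ_self m
        have hfd := findiff (fun i => k i - 1) M
          (∏ j ∈ Finset.range m, (X + C (x + (m:ℤ) - (j:ℤ)))) hdeg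
        have htrans : ∀ I ∈ M.powerset,
            (-1:ℤ)^(m + 1 - I.card)
              * (x * fall (x + (∑ i ∈ I, k i) + (m:ℤ) - (I.card:ℤ)) m)
            = ((-1:ℤ)^(m+1) * x) *
              ((-1:ℤ)^I.card *
                (∏ j ∈ Finset.range m, (X + C (x + (m:ℤ) - (j:ℤ)))).eval
                  (∑ i ∈ I, ((fun i => k i - 1) i))) := by
          intro I hI
          have hsub : I ⊆ M := Finset.mem_powerset.mp hI
          have hc2 : I.card ≤ m + 1 := hM ▸ Finset.card_le_card hsub
          rw [neg_one_pow_sub hc2]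
          have hv : ∑ i ∈ I, ((fun i => k i - 1) i) = (∑ i ∈ I, k i) - (I.card:ℤ) := by
            simp only []
            rw [Finset.sum_sub_distrib]
            simp
          rw [hv, heval]
          rw [show x + (m:ℤ) + ((∑ i ∈ I, k i) - (I.card:ℤ))
            = x + (∑ i ∈ I, k i) + (m:ℤ) - (I.card:ℤ) by ring]
          ring
        rw [Finset.sum_congr rfl htrans, ← Finset.mul_sum, hfd, mul_zero]
      -- conclude via constancy
      have main := const_of_step
        (fun z => fall (z + ∑ i ∈ M, k i) (m+1)
          + ∑ I ∈ M.powerset.filter (fun I => I.Nonempty),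
              x * fall (x + (∑ i ∈ I, k i) - 1) (I.card - 1)
                * fall (z + ∑ i ∈ M \ I, k i) (m + 1 - I.card)
          - fall (x + z + ∑ i ∈ M, k i) (m+1))
        hstep (-x - ∑ i ∈ M, k i) hanchor y
      linarith

/-- Lemma A.2: index `0` plays the role of `k₁` and the remaining `m` indices play
the role of `M = {2,…,m+1}`. Here `K = k₁ + ∑_{i∈M} kᵢ`. -/
theorem lemma_A2 (m : ℕ) (k : Fin (m + 1) → ℕ) :
    fall ((∑ i, (k i : ℤ)) - k 0) m
      + ∑ I ∈ ((Finset.univ : Finset (Fin (m + 1))).erase 0).powerset.filter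
          (fun I => I.Nonempty),
          ((k 0 : ℤ) + 1) * fall ((∑ i ∈ I, (k i : ℤ)) + k 0) (I.card - 1)
            * fall ((∑ i, (k i : ℤ)) - (∑ i ∈ I, (k i : ℤ)) - k 0) (m - I.card)
      = fall ((∑ i, (k i : ℤ)) + 1) m := by
  set M : Finset (Fin (m+1)) := (Finset.univ : Finset (Fin (m + 1))).erase 0 with hMdef
  have h0 : (0 : Fin (m+1)) ∈ (Finset.univ : Finset (Fin (m+1))) := Finset.mem_univ 0
  have hcard : M.card = m := by
    rw [hMdef, Finset.card_erase_of_mem h0, Finset.card_univ, Fintype.card_fin]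
    omega
  have hU : (k 0 : ℤ) + ∑ i ∈ M, (k i : ℤ) = ∑ i, (k i : ℤ) := by
    rw [hMdef]
    exact Finset.add_sum_erase Finset.univ (fun i => (k i : ℤ)) h0
  have H := key m M hcard (fun i => (k i : ℤ)) ((k 0 : ℤ) + 1) 0
  rw [show (0:ℤ) + ∑ i ∈ M, (k i : ℤ) = (∑ i, (k i : ℤ)) - k 0 by linarith] at H
  rw [show ((k 0 : ℤ) + 1) + 0 + ∑ i ∈ M, (k i : ℤ) = (∑ i, (k i : ℤ)) + 1 by linarith] at H
  have hterm : ∀ I ∈ M.powerset.filter (fun I => I.Nonempty),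
      ((k 0 : ℤ) + 1) * fall (((k 0 : ℤ) + 1) + (∑ i ∈ I, (k i : ℤ)) - 1) (I.card - 1)
        * fall (0 + ∑ i ∈ M \ I, (k i : ℤ)) (m - I.card)
      = ((k 0 : ℤ) + 1) * fall ((∑ i ∈ I, (k i : ℤ)) + k 0) (I.card - 1)
        * fall ((∑ i, (k i : ℤ)) - (∑ i ∈ I, (k i : ℤ)) - k 0) (m - I.card) := by
    intro I hI
    have hsub : I ⊆ M := Finset.mem_powerset.mp (Finset.mem_filter.mp hI).1
    have hsd : ∑ i ∈ M \ I, (k i : ℤ) = (∑ i ∈ M, (k i : ℤ)) - ∑ i ∈ I, (k i : ℤ) :=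
      Finset.sum_sdiff_eq_sub hsub
    rw [show ((k 0 : ℤ) + 1) + (∑ i ∈ I, (k i : ℤ)) - 1 = (∑ i ∈ I, (k i : ℤ)) + k 0 by ring,
      hsd, show (0:ℤ) + ((∑ i ∈ M, (k i : ℤ)) - ∑ i ∈ I, (k i : ℤ))
        = (∑ i, (k i : ℤ)) - (∑ i ∈ I, (k i : ℤ)) - k 0 by linarith]
  rw [Finset.sum_congr rfl hterm] at H
  exact H
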